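/- Let M ⊆ E be a smooth embedded submanifold, let R be a retraction on M, and let C ⊆ M be compact. Then there exist a radius r > 0 and constants α, β ≥ 0 such that for all x ∈ C and all ξ ∈ T_xM with ‖ξ‖ ≤ r one has ‖R_x(ξ) − x‖ ≤ α‖ξ‖ and ‖R_x(ξ) − x − ξ‖ ≤ β‖ξ‖². -/

import Mathlib

open Set Filter Topology

noncomputable section

variable {E : Type*} [NormedAddCommGroup E] [InnerProductSpace ℝ E] [FiniteDimensional ℝ E]

open Classical in
/-- The indicator function of a set `M` (`0` on `M`, `+∞` elsewhere), with values in `EReal`. -/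
def indicatorFun (M : Set E) (x : E) : EReal := if x ∈ M then 0 else ⊤

/-- The Fréchet (regular) subdifferential of an extended-real-valued function `g` at `x`. -/
def frechetSubdiff (g : E → EReal) (x : E) : Set E :=
  {v | ∀ ε : ℝ, 0 < ε →
    ∀ᶠ y in 𝓝 x, g x + (((inner ℝ v (y - x) : ℝ) - ε * ‖y - x‖ : ℝ) : EReal) ≤ g y}

/-- The limiting (Mordukhovich) subdifferential of `g` at `x`. -/
def limitingSubdiff (g : E → EReal) (x : E) : Set E :=
  {v | ∃ xs vs : ℕ → E,
    Tendsto xs atTop (𝓝 x) ∧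
    Tendsto (fun n => g (xs n)) atTop (𝓝 (g x)) ∧
    (∀ n, vs n ∈ frechetSubdiff g (xs n)) ∧
    Tendsto vs atTop (𝓝 v)}

/-- The projectional limiting subdifferential of `g` at `x` relative to `M`:
the orthogonal projection onto the tangent space `T x` of the limiting
subdifferential of `g + δ_M` at `x`. -/
def projSubdiff (g : E → ℝ) (M : Set E) (T : E → Submodule ℝ E) (x : E) : Set E :=
  (fun v => (((T x).orthogonalProjection v : T x) : E)) ''
    limitingSubdiff (fun y => (g y : EReal) + indicatorFun M y) x

/-- `M ⊆ E` is a smooth embedded submanifold with tangent spaces `T x`: around each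
point of `M` there is a `C¹` local defining function with surjective derivative at
that point, and on `M` the tangent space is the kernel of the derivative. -/
def IsSubmanifold (M : Set E) (T : E → Submodule ℝ E) : Prop :=
  ∀ x ∈ M, ∃ (m : ℕ) (U : Set E) (F : E → (Fin m → ℝ)),
    IsOpen U ∧ x ∈ U ∧ ContDiffOn ℝ 1 F U ∧
    Function.Surjective ⇑(fderiv ℝ F x) ∧
    M ∩ U = {y ∈ U | F y = 0} ∧
    ∀ y ∈ M ∩ U, T y = LinearMap.ker (fderiv ℝ F y : E →ₗ[ℝ] (Fin m → ℝ))

/-- A retraction on the submanifold `M` with tangent spaces `T`: a `C²` map on the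
tangent bundle with values in `M` such that `R_x(0) = x` and `DR_x(0) = id`. -/
structure Retraction (M : Set E) (T : E → Submodule ℝ E) where
  R : E → E → E
  mem_target : ∀ x ∈ M, ∀ ξ ∈ T x, R x ξ ∈ M
  map_zero : ∀ x ∈ M, R x 0 = x
  smooth : ContDiffOn ℝ 2 (fun p : E × E => R p.1 p.2) {p : E × E | p.1 ∈ M ∧ p.2 ∈ T p.1}
  deriv_id : ∀ x ∈ M, ∀ ξ ∈ T x, HasDerivAt (fun t : ℝ => R x (t • ξ)) ξ 0

/-- Local second-order bound for a retraction near a point of `C`. -/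
lemma retraction_local_bound (M : Set E) (T : E → Submodule ℝ E)
    (Ret : Retraction M T) (C : Set E) (hCM : C ⊆ M) (x : E) :
    ∃ δ > (0:ℝ), ∃ B ≥ (0:ℝ), x ∈ C → ∀ y ∈ M, ∀ ξ ∈ T y, ‖y - x‖ < δ / 2 → ‖ξ‖ ≤ δ / 2 →
      ‖Ret.R y ξ - y - ξ‖ ≤ B * ‖ξ‖ ^ 2 := by
  by_cases hxC : x ∈ C
  swap
  · exact ⟨1, one_pos, 0, le_rfl, fun h => absurd h hxC⟩
  set S : Set (E × E) := {p : E × E | p.1 ∈ M ∧ p.2 ∈ T p.1} with hSdef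
  set f : E × E → E := fun p => Ret.R p.1 p.2 with hfdef
  have hxM : x ∈ M := hCM hxC
  have hx0S : ((x, (0:E))) ∈ S := ⟨hxM, (T x).zero_mem⟩
  have hsm : ContDiffWithinAt ℝ ((2:ℕ) : WithTop ℕ∞) f S (x, 0) := Ret.smooth (x, 0) hx0S
  obtain ⟨u, hu, p, htay⟩ := contDiffWithinAt_nat.1 hsm
  have hxu : ((x, (0:E))) ∈ u := mem_of_mem_nhdsWithin (mem_insert _ _) hu
  rw [mem_nhdsWithin] at hu
  obtain ⟨V, hV, hxV, hVu⟩ := hu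
  obtain ⟨δ₀, hδ₀, hball₀⟩ := Metric.isOpen_iff.1 hV _ hxV
  -- continuity of the second derivative gives a local bound
  have hcont : ContinuousWithinAt (fun q => p q 2) u (x, 0) := (htay.cont 2 le_rfl) _ hxu
  have hev : {q : E × E | dist (p q 2) (p (x, 0) 2) < 1} ∈ 𝓝[u] (x, 0) := by
    have := hcont (Metric.ball_mem_nhds (p (x, 0) 2) one_pos)
    exact this
  rw [mem_nhdsWithin] at hev
  obtain ⟨V₁, hV₁, hxV₁, hV₁u⟩ := hev
  obtain ⟨δ₁, hδ₁, hball₁⟩ := Metric.isOpen_iff.1 hV₁ _ hxV₁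
  set δ : ℝ := min δ₀ δ₁ with hδdef
  set B : ℝ := ‖p (x, 0) 2‖ + 1 with hBdef
  have hδpos : 0 < δ := lt_min hδ₀ hδ₁
  have hBnn : 0 ≤ B := by positivity
  have hSu : ∀ q ∈ S, dist q (x, 0) < δ → q ∈ u := fun q hqS hqd =>
    hVu ⟨hball₀ (lt_of_lt_of_le hqd (min_le_left _ _)), mem_insert_of_mem _ hqS⟩
  have hbound : ∀ q ∈ S, dist q (x, 0) < δ → ‖p q 2‖ ≤ B := by
    intro q hqS hqd
    have hqu : q ∈ u := hSu q hqS hqd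
    have h1 : dist (p q 2) (p (x, 0) 2) < 1 :=
      hV₁u ⟨hball₁ (lt_of_lt_of_le hqd (min_le_right _ _)), hqu⟩
    have := norm_sub_norm_le (p q 2) (p (x, 0) 2)
    rw [← dist_eq_norm] at this
    linarith
  refine ⟨δ, hδpos, B, hBnn, fun _ y hyM ξ hξT hyx hξ => ?_⟩
  set c : ℝ → E × E := fun s => (y, s • ξ) with hcdef
  set v : E × E := ((0 : E), ξ) with hvdef
  have hvnorm : ‖v‖ = ‖ξ‖ := by
    simp [hvdef, Prod.norm_def]
  have hkey : ∀ s ∈ Icc (0:ℝ) 1, c s ∈ S ∧ dist (c s) (x, 0) < δ := by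
    intro s hs
    refine ⟨⟨hyM, (T y).smul_mem s hξT⟩, ?_⟩
    rw [Prod.dist_eq]
    have h1 : dist y x < δ := by
      rw [dist_eq_norm]; linarith
    have h2 : dist (s • ξ) (0 : E) < δ := by
      rw [dist_eq_norm, sub_zero, norm_smul]
      have : |s| ≤ 1 := abs_le.2 ⟨by linarith [hs.1], hs.2⟩
      have : ‖(s:ℝ)‖ * ‖ξ‖ ≤ 1 * ‖ξ‖ :=
        mul_le_mul_of_nonneg_right (by simpa [Real.norm_eq_abs] using this) (norm_nonneg ξ)
      calc ‖(s:ℝ)‖ * ‖ξ‖ ≤ 1 * ‖ξ‖ := this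
        _ = ‖ξ‖ := one_mul _
        _ ≤ δ / 2 := hξ
        _ < δ := by linarith
    exact max_lt h1 h2
  have hmaps : MapsTo c (Icc (0:ℝ) 1) u := fun s hs =>
    hSu _ (hkey s hs).1 (hkey s hs).2
  have hc : ∀ s : ℝ, HasDerivWithinAt c v (Icc (0:ℝ) 1) s := by
    intro s
    have h1 : HasDerivAt (fun s : ℝ => s • ξ) ξ s := by
      simpa using (hasDerivAt_id s).smul_const ξ
    exact ((HasDerivAt.prodMk (hasDerivAt_const s y) h1)).hasDerivWithinAt
  have h12 : ((1:ℕ) : WithTop ℕ∞) ≤ ((2:ℕ) : WithTop ℕ∞) := by norm_cast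
  have h12' : ((1:ℕ) : ℕ∞) < ((2:ℕ) : WithTop ℕ∞) := by norm_cast
  set φ : ℝ → E := fun s => (continuousMultilinearCurryFin1 ℝ (E × E) E (p (c s) 1)) v with hφdef
  have hg : ∀ s ∈ Icc (0:ℝ) 1, HasDerivWithinAt (f ∘ c) (φ s) (Icc (0:ℝ) 1) s := by
    intro s hs
    exact (htay.hasFDerivWithinAt (by norm_num) (hmaps hs)).comp_hasDerivWithinAt s (hc s) hmaps
  set A : ContinuousMultilinearMap ℝ (fun _ : Fin 1 => E × E) E →L[ℝ] E :=
    (ContinuousLinearMap.apply ℝ E v).comp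
      ((continuousMultilinearCurryFin1 ℝ (E × E) E).toContinuousLinearEquiv :
        ContinuousMultilinearMap ℝ (fun _ : Fin 1 => E × E) E ≃L[ℝ] (E × E →L[ℝ] E)).toContinuousLinearMap
    with hAdef
  set ψ : ℝ → E := fun s => A ((p (c s) 2).curryLeft v) with hψdef
  have hφ' : ∀ s ∈ Icc (0:ℝ) 1, HasDerivWithinAt φ (ψ s) (Icc (0:ℝ) 1) s := by
    intro s hs
    have h1 : HasDerivWithinAt (fun s => p (c s) 1) ((p (c s) 2).curryLeft v)
        (Icc (0:ℝ) 1) s :=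
      (htay.fderivWithin 1 h12' _ (hmaps hs)).comp_hasDerivWithinAt s (hc s) hmaps
    exact A.hasFDerivAt.comp_hasDerivWithinAt s h1
  have hψbound : ∀ s ∈ Icc (0:ℝ) 1, ‖ψ s‖ ≤ B * ‖ξ‖ ^ 2 := by
    intro s hs
    have hψeq : ψ s = (p (c s) 2) (Fin.cons v (Fin.snoc 0 v)) := rfl
    rw [hψeq]
    have h0 : (Fin.cons v (Fin.snoc 0 v) : Fin 2 → E × E) 0 = v := by simp
    have h1 : (Fin.cons v (Fin.snoc 0 v) : Fin 2 → E × E) 1 = v := by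
      have : (1 : Fin 2) = Fin.succ 0 := rfl
      rw [this, Fin.cons_succ]
      exact Fin.snoc_last _ _
    calc ‖(p (c s) 2) (Fin.cons v (Fin.snoc 0 v))‖
        ≤ ‖p (c s) 2‖ * ∏ i, ‖(Fin.cons v (Fin.snoc 0 v) : Fin 2 → E × E) i‖ :=
          (p (c s) 2).le_opNorm _
      _ = ‖p (c s) 2‖ * (‖ξ‖ * ‖ξ‖) := by
          rw [Fin.prod_univ_two, h0, h1, hvnorm]
      _ ≤ B * (‖ξ‖ * ‖ξ‖) := by
          refine mul_le_mul_of_nonneg_right ?_ (by positivity)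
          exact hbound _ (hkey s hs).1 (hkey s hs).2
      _ = B * ‖ξ‖ ^ 2 := by ring
  have h0mem : (0:ℝ) ∈ Icc (0:ℝ) 1 := ⟨le_rfl, zero_le_one⟩
  have h1mem : (1:ℝ) ∈ Icc (0:ℝ) 1 := ⟨zero_le_one, le_rfl⟩
  -- first mean value estimate: ‖φ s - φ 0‖ ≤ B‖ξ‖²
  have hφlip : ∀ s ∈ Icc (0:ℝ) 1, ‖φ s - φ 0‖ ≤ B * ‖ξ‖ ^ 2 := by
    intro s hs
    have := Convex.norm_image_sub_le_of_norm_hasDerivWithin_le hφ' hψbound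
      (convex_Icc 0 1) h0mem hs
    have hst : ‖s - 0‖ ≤ 1 := by
      rw [sub_zero, Real.norm_eq_abs]
      exact abs_le.2 ⟨by linarith [hs.1], hs.2⟩
    calc ‖φ s - φ 0‖ ≤ B * ‖ξ‖ ^ 2 * ‖s - 0‖ := this
      _ ≤ B * ‖ξ‖ ^ 2 * 1 := mul_le_mul_of_nonneg_left hst (by positivity)
      _ = B * ‖ξ‖ ^ 2 := mul_one _
  -- second mean value estimate on G s = g s - s • φ 0
  set G : ℝ → E := fun s => (f ∘ c) s - s • φ 0 with hGdef
  have hG' : ∀ s ∈ Icc (0:ℝ) 1, HasDerivWithinAt G (φ s - φ 0) (Icc (0:ℝ) 1) s := by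
    intro s hs
    have h2 : HasDerivWithinAt (fun s : ℝ => s • φ 0) (φ 0) (Icc (0:ℝ) 1) s := by
      simpa using ((hasDerivAt_id s).smul_const (φ 0)).hasDerivWithinAt
    exact (hg s hs).sub h2
  have hGbound : ∀ s ∈ Icc (0:ℝ) 1, ‖φ s - φ 0‖ ≤ B * ‖ξ‖ ^ 2 := hφlip
  have hGest := Convex.norm_image_sub_le_of_norm_hasDerivWithin_le hG' hGbound
    (convex_Icc 0 1) h0mem h1mem
  -- identify φ 0 = ξ
  have hφ0 : φ 0 = ξ := by
    have hud : UniqueDiffWithinAt ℝ (Icc (0:ℝ) 1) 0 := (uniqueDiffOn_Icc one_pos) 0 h0mem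
    have h1 : HasDerivWithinAt (f ∘ c) (φ 0) (Icc (0:ℝ) 1) 0 := hg 0 h0mem
    have h2 : HasDerivWithinAt (f ∘ c) ξ (Icc (0:ℝ) 1) 0 :=
      (Ret.deriv_id y hyM ξ hξT).hasDerivWithinAt
    rw [← h1.derivWithin hud, h2.derivWithin hud]
  have hGdiff : G 1 - G 0 = Ret.R y ξ - y - ξ := by
    have e1 : (f ∘ c) 1 = Ret.R y ξ := by
      show Ret.R y ((1:ℝ) • ξ) = Ret.R y ξ
      rw [one_smul]
    have e0 : (f ∘ c) 0 = y := by
      show Ret.R y ((0:ℝ) • ξ) = y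
      rw [zero_smul]
      exact Ret.map_zero y hyM
    simp only [hGdef, e1, e0, one_smul, zero_smul, sub_zero, hφ0]
    abel
  rw [hGdiff] at hGest
  simpa using hGest

/-- Uniform first- and second-order bounds for a retraction on a compact subset. -/
theorem stmt2 (M : Set E) (T : E → Submodule ℝ E) (hM : IsSubmanifold M T)
    (Ret : Retraction M T) (C : Set E) (hCM : C ⊆ M) (hC : IsCompact C) :
    ∃ r > (0:ℝ), ∃ α ≥ (0:ℝ), ∃ β ≥ (0:ℝ), ∀ x ∈ C, ∀ ξ ∈ T x, ‖ξ‖ ≤ r →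
      ‖Ret.R x ξ - x‖ ≤ α * ‖ξ‖ ∧ ‖Ret.R x ξ - x - ξ‖ ≤ β * ‖ξ‖ ^ 2 := by
  rcases C.eq_empty_or_nonempty with hCe | hCne
  · exact ⟨1, one_pos, 0, le_rfl, 0, le_rfl, fun x hx => by rw [hCe] at hx; exact absurd hx (Set.notMem_empty x)⟩
  choose δ hδpos B hBnn hP using retraction_local_bound M T Ret C hCM
  obtain ⟨t, htC, hcover⟩ := hC.elim_nhds_subcover (fun z => Metric.ball z (δ z / 2))
    (fun z _ => Metric.ball_mem_nhds z (by have := hδpos z; positivity))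
  obtain ⟨x₀, hx₀⟩ := hCne
  obtain ⟨i₀, hi₀t, _⟩ := Set.mem_iUnion₂.1 (hcover hx₀)
  have hne : t.Nonempty := ⟨i₀, hi₀t⟩
  set r : ℝ := min 1 ((t.inf' hne δ) / 2) with hrdef
  set β : ℝ := t.sup' hne B with hβdef
  have hrpos : 0 < r := by
    refine lt_min one_pos ?_
    have : 0 < t.inf' hne δ := (Finset.lt_inf'_iff hne).2 fun i _ => hδpos i
    positivity
  have hβnn : 0 ≤ β := le_trans (hBnn i₀) (Finset.le_sup' B hi₀t)
  set α : ℝ := 1 + β * r with hαdef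
  have hαnn : 0 ≤ α := by positivity
  refine ⟨r, hrpos, α, hαnn, β, hβnn, fun x hx ξ hξT hξr => ?_⟩
  obtain ⟨i, hit, hxball⟩ := Set.mem_iUnion₂.1 (hcover hx)
  have hxi : ‖x - i‖ < δ i / 2 := by
    rw [← dist_eq_norm]; exact hxball
  have hξi : ‖ξ‖ ≤ δ i / 2 := by
    have h1 : r ≤ t.inf' hne δ / 2 := min_le_right _ _
    have h2 : t.inf' hne δ ≤ δ i := Finset.inf'_le _ hit
    linarith
  have hsecond : ‖Ret.R x ξ - x - ξ‖ ≤ B i * ‖ξ‖ ^ 2 :=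
    hP i (htC i hit) x (hCM hx) ξ hξT hxi hξi
  have hBiβ : B i ≤ β := Finset.le_sup' B hit
  have hsecond' : ‖Ret.R x ξ - x - ξ‖ ≤ β * ‖ξ‖ ^ 2 :=
    le_trans hsecond (mul_le_mul_of_nonneg_right hBiβ (by positivity))
  refine ⟨?_, hsecond'⟩
  have htri : ‖Ret.R x ξ - x‖ ≤ ‖Ret.R x ξ - x - ξ‖ + ‖ξ‖ := by
    have h := norm_add_le (Ret.R x ξ - x - ξ) ξ
    have e : Ret.R x ξ - x - ξ + ξ = Ret.R x ξ - x := by abel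
    rwa [e] at h
  have hsq : β * ‖ξ‖ ^ 2 ≤ β * r * ‖ξ‖ := by
    have h1 : ‖ξ‖ * ‖ξ‖ ≤ r * ‖ξ‖ := mul_le_mul_of_nonneg_right hξr (norm_nonneg ξ)
    calc β * ‖ξ‖ ^ 2 = β * (‖ξ‖ * ‖ξ‖) := by ring
      _ ≤ β * (r * ‖ξ‖) := mul_le_mul_of_nonneg_left h1 hβnn
      _ = β * r * ‖ξ‖ := by ring
  calc ‖Ret.R x ξ - x‖ ≤ ‖Ret.R x ξ - x - ξ‖ + ‖ξ‖ := htri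
    _ ≤ β * ‖ξ‖ ^ 2 + ‖ξ‖ := by linarith
    _ ≤ β * r * ‖ξ‖ + 1 * ‖ξ‖ := by linarith [hsq]
    _ = α * ‖ξ‖ := by rw [hαdef]; ring

end
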